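/- arXiv:1401.6618 — 3 statements merged into one kernel-verified Lean document; each statement's English description precedes it below -/
import Mathlib

section
/- For a finite field F with |F| ≥ 3, the Jacobson graph of ℤ/2 ⊕ F is not Hamiltonian. -/
open scoped Classical

/-- The Jacobson graph of a commutative ring `R`. -/
def jacobsonGraph (R : Type*) [CommRing R] :
    SimpleGraph {x : R // x ∉ Ideal.jacobson (⊥ : Ideal R)} where
  Adj x y := x ≠ y ∧ ¬ IsUnit (1 - (x : R) * y)
  symm := ⟨by
    rintro x y ⟨h1, h2⟩
    exact ⟨h1.symm, by rwa [mul_comm] at h2⟩⟩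
  loopless := ⟨fun x ⟨h, _⟩ => h rfl⟩

/-- If `v` has a unique possible neighbor `w`, no cycle passes through `v`. -/
lemma no_cycle_of_unique_neighbor {V : Type*} {G : SimpleGraph V} {v w : V}
    (huniq : ∀ u, G.Adj v u → u = w) (q : G.Walk v v) (hq : q.IsCycle) : False := by
  obtain ⟨u1, h1, q1, rfl⟩ := SimpleGraph.Walk.not_nil_iff.1 hq.not_nil
  have hrnil : ¬ (SimpleGraph.Walk.cons h1 q1).reverse.Nil := by
    rw [SimpleGraph.Walk.nil_iff_length_eq]; simp
  obtain ⟨u2, h2, q2, hr⟩ := SimpleGraph.Walk.not_nil_iff.1 hrnil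
  have hu : u2 = u1 := (huniq _ h2).trans (huniq _ h1).symm
  subst hu
  have hedges : (SimpleGraph.Walk.cons h1 q1).edges.reverse = s(v, u2) :: q2.edges := by
    rw [← SimpleGraph.Walk.edges_reverse, hr, SimpleGraph.Walk.edges_cons]
  have hlen : 3 ≤ (SimpleGraph.Walk.cons h1 q1).edges.length := by
    rw [SimpleGraph.Walk.length_edges]; exact hq.three_le_length
  have hmain : s(v, u2) :: q1.edges = q2.edges.reverse ++ [s(v, u2)] := by
    have := congrArg List.reverse hedges
    simpa [SimpleGraph.Walk.edges_cons] using this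
  have hmem : s(v, u2) ∈ q1.edges := by
    rcases hq2 : q2.edges.reverse with _ | ⟨a, s⟩
    · rw [hq2] at hmain
      simp at hmain
      rw [SimpleGraph.Walk.edges_cons, SimpleGraph.Walk.edges_eq_nil.mpr hmain] at hlen
      simp at hlen
    · rw [hq2] at hmain
      simp only [List.cons_append, List.cons.injEq] at hmain
      rw [hmain.2]
      simp
  have hnodup := hq.isTrail.edges_nodup
  rw [SimpleGraph.Walk.edges_cons, List.nodup_cons] at hnodup
  exact hnodup.1 hmem

lemma zmod2_mem_aux (F : Type*) [Field F] (a : ZMod 2) :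
    ((a, (1:F)) : ZMod 2 × F) ∉ Ideal.jacobson (⊥ : Ideal (ZMod 2 × F)) := by
  intro h
  have h1 := Ideal.mem_jacobson_bot.1 h (a, -1)
  have h2 := (RingHom.snd (ZMod 2) F).isUnit_map h1
  simp at h2

/-- For a finite field F with |F| ≥ 3, the Jacobson graph of ℤ/2 ⊕ F is
not Hamiltonian. -/
theorem jacobsonGraph_zmod2_field_not_isHamiltonian
    (F : Type*) [Field F] [Finite F] (hF : 3 ≤ Nat.card F) :
    haveI : Fintype {x : ZMod 2 × F // x ∉ Ideal.jacobson (⊥ : Ideal (ZMod 2 × F))} :=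
      Fintype.ofFinite _
    ¬ (jacobsonGraph (ZMod 2 × F)).IsHamiltonian := by
  intro hham
  set V := {x : ZMod 2 × F // x ∉ Ideal.jacobson (⊥ : Ideal (ZMod 2 × F))} with hV
  set G := jacobsonGraph (ZMod 2 × F) with hG
  have hone : (1 : F) ≠ 0 := one_ne_zero
  let v : V := ⟨(0, 1), zmod2_mem_aux F 0⟩
  let w : V := ⟨(1, 1), zmod2_mem_aux F 1⟩
  letI : Fintype V := Fintype.ofFinite _
  have hvw : v ≠ w := by
    intro h
    have := congrArg Subtype.val h
    simp only [v, w, Prod.mk.injEq] at this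
    exact zero_ne_one this.1
  -- v has a unique neighbor, namely w
  have huniq : ∀ u : V, G.Adj v u → u = w := by
    rintro ⟨⟨a, b⟩, hu⟩ hadj
    obtain ⟨hne, hnu⟩ : v ≠ ⟨(a, b), hu⟩ ∧ ¬ IsUnit (1 - ((v : V) : ZMod 2 × F) * (a, b)) := hadj
    have hb : b = 1 := by
      by_contra hb
      apply hnu
      rw [isUnit_iff_exists_inv]
      refine ⟨(1, (1 - b)⁻¹), ?_⟩
      have hb' : (1 : F) - b ≠ 0 := sub_ne_zero.2 (Ne.symm hb)
      ext
      · simp [v]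
      · simp [v]
        exact mul_inv_cancel₀ hb'
    subst hb
    have ha : a = 1 := by
      have : a = 0 ∨ a = 1 := (by decide : ∀ x : ZMod 2, x = 0 ∨ x = 1) a
      rcases this with h0 | h1
      · exfalso; apply hne; apply Subtype.ext; simp [v, h0]
      · exact h1
    subst ha
    rfl
  have hcard : Fintype.card V ≠ 1 := by
    have : 1 < Fintype.card V := Fintype.one_lt_card_iff_nontrivial.2 ⟨⟨v, w, hvw⟩⟩
    omega
  obtain ⟨a, p, hp⟩ := hham hcard
  have hvsupp : v ∈ p.support := hp.mem_support v
  exact no_cycle_of_unique_neighbor huniq (p.rotate v hvsupp) (hp.isCycle.rotate hvsupp)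
end

section
/- The Jacobson graph of a finite commutative local ring R with maximal ideal m and residue field F = R/m is a disjoint union of complete graphs and complete bipartite graphs; in particular, the vertices 1 + m form a clique (complete subgraph) of size |m|. -/
open scoped Classical

section Aux

variable {R : Type*} [CommRing R] [IsLocalRing R]

local notation "m" => IsLocalRing.maximalIdeal R

lemma jac_eq : Ideal.jacobson (⊥ : Ideal R) = IsLocalRing.maximalIdeal R :=
  IsLocalRing.jacobson_eq_maximalIdeal ⊥ bot_ne_top

lemma adj_iff (x y : {x : R // x ∉ Ideal.jacobson (⊥ : Ideal R)}) :
    (jacobsonGraph R).Adj x y ↔ x ≠ y ∧ (x : R) * y - 1 ∈ m := by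
  have : ¬ IsUnit (1 - (x : R) * y) ↔ (x : R) * y - 1 ∈ m := by
    rw [IsLocalRing.mem_maximalIdeal, mem_nonunits_iff]
    constructor
    · intro h hu
      exact h (by simpa using hu.neg)
    · intro h hu
      exact h (by simpa using hu.neg)
  exact and_congr Iff.rfl this

lemma vert_not_mem (x : {x : R // x ∉ Ideal.jacobson (⊥ : Ideal R)}) : (x : R) ∉ m := by
  rw [← jac_eq]; exact x.2

/-- The relation characterizing connected components. -/
def JRel (v x : {x : R // x ∉ Ideal.jacobson (⊥ : Ideal R)}) : Prop :=
  (x : R) * v - 1 ∈ m ∨ (x : R) - v ∈ m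

lemma reach_to_rel {v x : {x : R // x ∉ Ideal.jacobson (⊥ : Ideal R)}}
    (h : (jacobsonGraph R).Reachable x v) : JRel v x := by
  obtain ⟨w⟩ := h
  induction w with
  | nil => exact Or.inr (by simpa using Ideal.zero_mem m)
  | @cons a b c hadj p ih =>
    rw [adj_iff] at hadj
    obtain ⟨-, hab⟩ := hadj
    rcases ih with h1 | h2
    · -- b*v - 1 ∈ m, a*b - 1 ∈ m ⇒ a - v ∈ m
      refine Or.inr ?_
      have : (a : R) - c = (c : R) * ((a : R) * b - 1) - (a : R) * ((b : R) * c - 1) := by ring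
      rw [this]
      exact Ideal.sub_mem m (Ideal.mul_mem_left m _ hab) (Ideal.mul_mem_left m _ h1)
    · -- b - v ∈ m, a*b - 1 ∈ m ⇒ a*v - 1 ∈ m
      refine Or.inl ?_
      have : (a : R) * c - 1 = ((a : R) * b - 1) - (a : R) * ((b : R) - c) := by ring
      rw [this]
      exact Ideal.sub_mem m hab (Ideal.mul_mem_left m _ h2)

lemma rel_to_reach {v x : {x : R // x ∉ Ideal.jacobson (⊥ : Ideal R)}}
    (h : JRel v x) : (jacobsonGraph R).Reachable x v := by
  rcases eq_or_ne x v with rfl | hne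
  · exact SimpleGraph.Reachable.refl x
  rcases h with h1 | h2
  · -- adjacent directly
    exact SimpleGraph.Adj.reachable ((adj_iff x v).2 ⟨hne, h1⟩)
  · -- x - v ∈ m, x ≠ v
    by_cases hsq : (x : R) * v - 1 ∈ m
    · exact SimpleGraph.Adj.reachable ((adj_iff x v).2 ⟨hne, hsq⟩)
    · -- use the inverse of x
      have hxu : IsUnit (x : R) := IsLocalRing.notMem_maximalIdeal.1 (vert_not_mem x)
      obtain ⟨u, hu⟩ := hxu
      set z : R := (↑u⁻¹ : R) with hz
      have hxz : (x : R) * z = 1 := by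
        rw [hz, ← hu]; exact u.mul_inv
      have hzu : IsUnit z := u⁻¹.isUnit
      have hznm : z ∉ Ideal.jacobson (⊥ : Ideal R) := by
        rw [jac_eq]; exact IsLocalRing.notMem_maximalIdeal.2 hzu
      set zz : {x : R // x ∉ Ideal.jacobson (⊥ : Ideal R)} := ⟨z, hznm⟩ with hzz
      have hxz' : (x : R) * (zz : R) - 1 ∈ m := by
        simp [hzz, hxz]
      have hxne : x ≠ zz := by
        intro he
        apply hsq
        rw [← he] at hxz'
        have heq : (x : R) * v - 1 = ((x:R) * x - 1) - (x : R) * ((x:R) - v) := by ring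
        rw [heq]
        exact Ideal.sub_mem m hxz' (Ideal.mul_mem_left m _ h2)
      have hzv : (zz : R) * v - 1 ∈ m := by
        have : (zz : R) * v - 1 = (zz : R) * ((v : R) - x) + ((x:R) * zz - 1) := by ring
        rw [this]
        exact Ideal.add_mem m (Ideal.mul_mem_left m _ (by simpa using neg_mem h2)) hxz'
      have hzne : zz ≠ v := by
        intro he
        apply hsq
        have : (x : R) * v - 1 = ((zz : R) * v - 1) + (v : R) * ((x : R) - zz) := by ring
        rw [this]
        refine Ideal.add_mem m hzv (Ideal.mul_mem_left m _ ?_)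
        have : (x : R) - (zz : R) = ((x:R) - v) + ((v : R) - zz) := by ring
        rw [this, he]
        simpa using h2
      have h1 : (jacobsonGraph R).Adj x zz := (adj_iff x zz).2 ⟨hxne, hxz'⟩
      have h2' : (jacobsonGraph R).Adj zz v := (adj_iff zz v).2 ⟨hzne, hzv⟩
      exact h1.reachable.trans h2'.reachable

end Aux

/-- The Jacobson graph of a finite commutative local ring is a disjoint
union of complete graphs and complete bipartite graphs: every connected component is
either complete or complete bipartite.  In particular, the vertices lying in `1 + m` form
a clique of size |m|. -/
theorem jacobsonGraph_localRing_components
    (R : Type*) [CommRing R] [Finite R] [IsLocalRing R] :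
    (∀ c : (jacobsonGraph R).ConnectedComponent,
      (∀ x ∈ c.supp, ∀ y ∈ c.supp, x ≠ y → (jacobsonGraph R).Adj x y) ∨
      (∃ s t : Set {x : R // x ∉ Ideal.jacobson (⊥ : Ideal R)},
        s ∪ t = c.supp ∧ Disjoint s t ∧
        ∀ x ∈ c.supp, ∀ y ∈ c.supp,
          ((jacobsonGraph R).Adj x y ↔ ((x ∈ s ∧ y ∈ t) ∨ (x ∈ t ∧ y ∈ s))))) ∧
    (jacobsonGraph R).IsClique
      {x : {x : R // x ∉ Ideal.jacobson (⊥ : Ideal R)} |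
        (x : R) - 1 ∈ IsLocalRing.maximalIdeal R} ∧
    ({x : {x : R // x ∉ Ideal.jacobson (⊥ : Ideal R)} |
        (x : R) - 1 ∈ IsLocalRing.maximalIdeal R} : Set _).ncard =
      Nat.card (IsLocalRing.maximalIdeal R) := by
  set M := IsLocalRing.maximalIdeal R with hM
  refine ⟨?_, ?_, ?_⟩
  · -- components
    intro c
    obtain ⟨v, rfl⟩ := Quot.exists_rep c
    have hsupp : ∀ x, x ∈ ((jacobsonGraph R).connectedComponentMk v).supp ↔ JRel v x := by
      intro x
      rw [SimpleGraph.ConnectedComponent.mem_supp_iff, SimpleGraph.ConnectedComponent.eq]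
      exact ⟨reach_to_rel, rel_to_reach⟩
    by_cases hv : (v : R) * v - 1 ∈ M
    · -- complete
      left
      intro x hx y hy hne
      have hx' : (x : R) - v ∈ M := by
        rcases (hsupp x).1 hx with h | h
        · have : (x : R) - v = (v : R) * ((x:R)*v - 1) - (x : R) * ((v:R)*v - 1) := by ring
          rw [this]
          exact Ideal.sub_mem M (Ideal.mul_mem_left M _ h) (Ideal.mul_mem_left M _ hv)
        · exact h
      have hy' : (y : R) - v ∈ M := by
        rcases (hsupp y).1 hy with h | h
        · have : (y : R) - v = (v : R) * ((y:R)*v - 1) - (y : R) * ((v:R)*v - 1) := by ring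
          rw [this]
          exact Ideal.sub_mem M (Ideal.mul_mem_left M _ h) (Ideal.mul_mem_left M _ hv)
        · exact h
      refine (adj_iff x y).2 ⟨hne, ?_⟩
      have : (x : R) * y - 1 = ((x:R) - v) * y + (v : R) * ((y:R) - v) + ((v:R)*v - 1) := by
        ring
      rw [this]
      exact Ideal.add_mem M (Ideal.add_mem M (Ideal.mul_mem_right _ M hx')
        (Ideal.mul_mem_left M _ hy')) hv
    · -- complete bipartite
      right
      refine ⟨{x | (x : R) - v ∈ M}, {x | (x : R) * v - 1 ∈ M}, ?_, ?_, ?_⟩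
      · ext x
        simp only [Set.mem_union, Set.mem_setOf_eq]
        exact ⟨fun h => (hsupp x).2 (Or.symm h), fun h => Or.symm ((hsupp x).1 h)⟩
      · rw [Set.disjoint_left]
        intro x hxs hxt
        apply hv
        have : (v : R) * v - 1 = ((x:R)*v - 1) - (v : R) * ((x:R) - v) := by ring
        rw [this]
        exact Ideal.sub_mem M hxt (Ideal.mul_mem_left M _ hxs)
      · intro x hx y hy
        constructor
        · intro hadj
          obtain ⟨hne, hxy⟩ := (adj_iff x y).1 hadj
          rcases (hsupp x).1 hx with h | h
          · -- x ∈ t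
            right
            refine ⟨h, ?_⟩
            -- y - v ∈ m from x*y - 1, x*v - 1
            have : (y : R) - v = (v : R) * ((x:R)*y - 1) - (y : R) * ((x:R)*v - 1) := by ring
            rw [Set.mem_setOf_eq, this]
            exact Ideal.sub_mem M (Ideal.mul_mem_left M _ hxy) (Ideal.mul_mem_left M _ h)
          · -- x ∈ s
            left
            refine ⟨h, ?_⟩
            have : (y : R) * v - 1 = ((x:R)*y - 1) - (y : R) * ((x:R) - v) := by ring
            rw [Set.mem_setOf_eq, this]
            exact Ideal.sub_mem M hxy (Ideal.mul_mem_left M _ h)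
        · rintro (⟨hxs, hyt⟩ | ⟨hxt, hys⟩)
          · have hm : (x : R) * y - 1 ∈ M := by
              have : (x : R) * y - 1 = ((y:R)*v - 1) + (y : R) * ((x:R) - v) := by ring
              rw [this]
              exact Ideal.add_mem M hyt (Ideal.mul_mem_left M _ hxs)
            refine (adj_iff x y).2 ⟨?_, hm⟩
            intro he
            apply hv
            rw [← he] at hyt
            have : (v : R) * v - 1 = ((x:R)*v - 1) - (v : R) * ((x:R) - v) := by ring
            rw [this]
            exact Ideal.sub_mem M hyt (Ideal.mul_mem_left M _ hxs)
          · have hm : (x : R) * y - 1 ∈ M := by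
              have : (x : R) * y - 1 = ((x:R)*v - 1) + (x : R) * ((y:R) - v) := by ring
              rw [this]
              exact Ideal.add_mem M hxt (Ideal.mul_mem_left M _ hys)
            refine (adj_iff x y).2 ⟨?_, hm⟩
            intro he
            apply hv
            rw [← he] at hys
            have : (v : R) * v - 1 = ((x:R)*v - 1) - (v : R) * ((x:R) - v) := by ring
            rw [this]
            exact Ideal.sub_mem M hxt (Ideal.mul_mem_left M _ hys)
  · -- clique
    intro x hx y hy hne
    refine (adj_iff x y).2 ⟨hne, ?_⟩
    have hx' : (x : R) - 1 ∈ M := hx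
    have hy' : (y : R) - 1 ∈ M := hy
    have : (x : R) * y - 1 = ((x:R) - 1) * y + ((y:R) - 1) := by ring
    rw [this]
    exact Ideal.add_mem M (Ideal.mul_mem_right _ M hx') hy'
  · -- cardinality
    rw [← Nat.card_coe_set_eq]
    refine Nat.card_congr ?_
    refine
      { toFun := fun x => ⟨(x : {x : R // x ∉ Ideal.jacobson (⊥ : Ideal R)}) - 1, x.2⟩
        invFun := fun a => ⟨⟨1 + (a : R), ?_⟩, ?_⟩
        left_inv := ?_
        right_inv := ?_ }
    · rw [jac_eq]
      intro h
      have h1 : (1 : R) ∈ M := by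
        have : (1 : R) = (1 + (a : R)) - a := by ring
        rw [this]
        exact Ideal.sub_mem M h a.2
      exact (IsLocalRing.maximalIdeal.isMaximal R).ne_top (Ideal.eq_top_of_isUnit_mem _ h1 isUnit_one)
    · show (1 + (a : R)) - 1 ∈ M
      simpa using a.2
    · intro x
      ext
      simp
    · intro a
      ext
      simp
end

section
/- For a finite field F with |F| ≥ 7, the longest induced path in the Jacobson graph of ℤ/2 ⊕ F has length 5 (i.e., 6 vertices), while the longest induced cycle has length 4; in particular the longest induced path is strictly longer than the longest induced cycle. -/
open scoped Classical

/-- An induced (chordless) cycle in a simple graph. -/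
def IsInducedCycle {V : Type*} {G : SimpleGraph V} {u : V} (p : G.Walk u u) : Prop :=
  p.IsCycle ∧ ∀ x ∈ p.support, ∀ y ∈ p.support, G.Adj x y → s(x, y) ∈ p.edges

/-- An induced (chordless) path in a simple graph. -/
def IsInducedPath {V : Type*} {G : SimpleGraph V} {u v : V} (p : G.Walk u v) : Prop :=
  p.IsPath ∧ ∀ x ∈ p.support, ∀ y ∈ p.support, G.Adj x y → s(x, y) ∈ p.edges

namespace JacAux

/-! ### Generic walk lemmas -/

section walkLemmas

variable {V : Type*} {G : SimpleGraph V}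

lemma getVert_mem_support {u v : V} (p : G.Walk u v) (i : ℕ) : p.getVert i ∈ p.support := by
  rcases le_or_gt i p.length with h | h
  · exact SimpleGraph.Walk.mem_support_iff_exists_getVert.mpr ⟨i, rfl, h⟩
  · rw [p.getVert_of_length_le h.le]; exact p.end_mem_support

lemma edge_getVert {u v x y : V} (p : G.Walk u v) (h : s(x, y) ∈ p.edges) :
    ∃ i < p.length, (p.getVert i = x ∧ p.getVert (i + 1) = y) ∨
      (p.getVert i = y ∧ p.getVert (i + 1) = x) := by
  induction p with
  | nil => simp at h
  | @cons a b c ha q ih =>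
    rw [SimpleGraph.Walk.edges_cons, List.mem_cons] at h
    rcases h with h | h
    · refine ⟨0, by simp, ?_⟩
      rw [Sym2.eq_iff] at h
      have h0 : (q.cons ha).getVert 0 = a := rfl
      have h1 : (q.cons ha).getVert 1 = b := by
        rw [SimpleGraph.Walk.getVert_cons_succ, SimpleGraph.Walk.getVert_zero]
      rw [h0, h1]
      tauto
    · obtain ⟨i, hi, h'⟩ := ih h
      refine ⟨i + 1, ?_, ?_⟩
      · rw [SimpleGraph.Walk.length_cons]; omega
      · rw [SimpleGraph.Walk.getVert_cons_succ, SimpleGraph.Walk.getVert_cons_succ]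
        exact h'

lemma nodup_getVert_inj {u v : V} {p : G.Walk u v} (hnd : p.support.Nodup) :
    ∀ i, i ≤ p.length → ∀ j, j ≤ p.length → p.getVert i = p.getVert j → i = j := by
  induction p with
  | nil =>
    intro i hi j hj _
    simp only [SimpleGraph.Walk.length_nil, Nat.le_zero] at hi hj
    omega
  | @cons a b c ha q ih =>
    rw [SimpleGraph.Walk.support_cons, List.nodup_cons] at hnd
    intro i hi j hj hij
    match i, j with
    | 0, 0 => rfl
    | 0, j + 1 =>
      exfalso
      apply hnd.1
      have : q.getVert j = a := by
        rw [← SimpleGraph.Walk.getVert_cons_succ q ha, ← hij]; rfl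
      rw [← this]
      exact getVert_mem_support q j
    | i + 1, 0 =>
      exfalso
      apply hnd.1
      have : q.getVert i = a := by
        rw [← SimpleGraph.Walk.getVert_cons_succ q ha, hij]; rfl
      rw [← this]
      exact getVert_mem_support q i
    | i + 1, j + 1 =>
      rw [SimpleGraph.Walk.length_cons] at hi hj
      have := ih hnd.2 i (by omega) j (by omega) hij
      omega

lemma tail_nodup_getVert_inj {u : V} {p : G.Walk u u} (hnd : p.support.tail.Nodup) :
    ∀ i, 1 ≤ i → i ≤ p.length → ∀ j, 1 ≤ j → j ≤ p.length → p.getVert i = p.getVert j → i = j := by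
  cases p with
  | nil => intro i h1 h2; simp only [SimpleGraph.Walk.length_nil, Nat.le_zero] at h2; omega
  | @cons a b ha q =>
    rw [SimpleGraph.Walk.support_cons, List.tail_cons] at hnd
    intro i hi1 hi2 j hj1 hj2 hij
    match i, j with
    | i + 1, j + 1 =>
      rw [SimpleGraph.Walk.length_cons] at hi2 hj2
      have := nodup_getVert_inj hnd i (by omega) j (by omega) hij
      omega

lemma length_rotate {u v : V} [DecidableEq V] (c : G.Walk v v) (h : u ∈ c.support) :
    (c.rotate u h).length = c.length := by
  rw [SimpleGraph.Walk.rotate, SimpleGraph.Walk.length_append, add_comm,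
    ← SimpleGraph.Walk.length_append, SimpleGraph.Walk.take_spec]

lemma rotate_induced {u v : V} [DecidableEq V] {p : G.Walk v v} (hp : IsInducedCycle p)
    (h : u ∈ p.support) : IsInducedCycle (p.rotate u h) := by
  refine ⟨hp.1.rotate h, ?_⟩
  intro x hx y hy hadj
  have hmem : ∀ z, z ∈ (p.rotate u h).support → z ∈ p.support := by
    intro z hz
    rw [SimpleGraph.Walk.mem_support_iff] at hz
    rcases hz with rfl | hz
    · exact h
    · exact List.mem_of_mem_tail (((p.support_rotate u h).perm).mem_iff.mp hz)
  exact ((p.rotate_edges u h).perm.mem_iff).mpr (hp.2 x (hmem x hx) y (hmem y hy) hadj)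

end walkLemmas

/-! ### Ring-specific lemmas -/

lemma prod_isUnit_iff {R S : Type*} [CommMonoid R] [CommMonoid S] {x : R × S} :
    IsUnit x ↔ IsUnit x.1 ∧ IsUnit x.2 := by
  simp only [isUnit_iff_exists_inv]
  constructor
  · rintro ⟨⟨b1, b2⟩, hb⟩
    rw [Prod.ext_iff] at hb
    exact ⟨⟨b1, hb.1⟩, ⟨b2, hb.2⟩⟩
  · rintro ⟨⟨b1, h1⟩, ⟨b2, h2⟩⟩
    exact ⟨(b1, b2), Prod.ext_iff.mpr ⟨h1, h2⟩⟩

variable {F : Type*} [Field F]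

abbrev Vx (F : Type*) [Field F] := {x : ZMod 2 × F // x ∉ Ideal.jacobson (⊥ : Ideal (ZMod 2 × F))}

lemma jac_bot (F : Type*) [Field F] : Ideal.jacobson (⊥ : Ideal (ZMod 2 × F)) = ⊥ := by
  refine le_antisymm (fun x hx => ?_) bot_le
  rw [Ideal.mem_jacobson_bot] at hx
  rw [Ideal.mem_bot]
  have h1 := hx ((1 : ZMod 2), (0 : F))
  rw [prod_isUnit_iff] at h1
  have hx1 : x.1 = 0 := by
    have h := h1.1
    rw [isUnit_iff_ne_zero] at h
    revert h
    show x.1 * 1 + 1 ≠ 0 → x.1 = 0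
    generalize x.1 = c
    revert c; decide
  have hx2 : x.2 = 0 := by
    by_contra h2
    have h := hx ((0 : ZMod 2), -x.2⁻¹)
    rw [prod_isUnit_iff, isUnit_iff_ne_zero, isUnit_iff_ne_zero] at h
    apply h.2
    show x.2 * -x.2⁻¹ + 1 = 0
    field_simp
    norm_num
  exact Prod.ext_iff.mpr ⟨hx1, hx2⟩

/-- Make a vertex from a nonzero element. -/
def vx (F : Type*) [Field F] (z : ZMod 2 × F) (hz : z ≠ 0) : Vx F :=
  ⟨z, by rw [jac_bot]; simpa using hz⟩

@[simp] lemma vx_val (z : ZMod 2 × F) (hz : z ≠ 0) : (vx F z hz).1 = z := rfl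

lemma vx_ne {z w : ZMod 2 × F} (hz : z ≠ 0) (hw : w ≠ 0) (h : z ≠ w) :
    vx F z hz ≠ vx F w hw := fun he => h (congrArg Subtype.val he)

lemma adj_iff {x y : Vx F} :
    (jacobsonGraph (ZMod 2 × F)).Adj x y ↔
      x ≠ y ∧ ((x.1.1 = 1 ∧ y.1.1 = 1) ∨ x.1.2 * y.1.2 = 1) := by
  show (x ≠ y ∧ ¬ IsUnit (1 - (x : ZMod 2 × F) * y)) ↔ _
  refine and_congr_right fun _ => ?_
  rw [prod_isUnit_iff, not_and_or]
  have e1 : (1 - (x : ZMod 2 × F) * y).1 = 1 - x.1.1 * y.1.1 := rfl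
  have e2 : (1 - (x : ZMod 2 × F) * y).2 = 1 - x.1.2 * y.1.2 := rfl
  rw [e1, e2, isUnit_iff_ne_zero, isUnit_iff_ne_zero, not_ne_iff, not_ne_iff,
    sub_eq_zero, sub_eq_zero]
  constructor
  · rintro (h | h)
    · left
      have key : ∀ u v : ZMod 2, u * v = 1 → u = 1 ∧ v = 1 := by decide
      exact key _ _ h.symm
    · right; exact h.symm
  · rintro (⟨hx, hy⟩ | h)
    · left; rw [hx, hy, mul_one]
    · right; exact h.symm

lemma val_ne_zero (v : Vx F) : v.1 ≠ 0 := by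
  intro h0
  exact v.2 (((SetLike.ext_iff.mp (jac_bot F)) _).mpr (Ideal.mem_bot.mpr h0))

lemma fst_cases (v : Vx F) : v.1.1 = 0 ∨ v.1.1 = 1 := by
  have : ∀ c : ZMod 2, c = 0 ∨ c = 1 := by decide
  exact this _

lemma snd_ne_zero {v : Vx F} (h : v.1.1 = 0) : v.1.2 ≠ 0 := by
  intro h2
  exact val_ne_zero v (Prod.ext_iff.mpr ⟨h, h2⟩)

lemma zmod2_zero_ne_one : (0 : ZMod 2) ≠ 1 := by decide

/-! ### Upper bound for induced paths -/

lemma path_le {u v : Vx F} (p : (jacobsonGraph (ZMod 2 × F)).Walk u v)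
    (hp : IsInducedPath p) : p.length ≤ 5 := by
  by_contra hlen
  push_neg at hlen
  set L := p.length with hL
  set g := p.getVert with hg
  have inj : ∀ i, i ≤ L → ∀ j, j ≤ L → g i = g j → i = j :=
    nodup_getVert_inj ((SimpleGraph.Walk.isPath_def p).mp hp.1)
  have adj : ∀ i, i < L → (jacobsonGraph (ZMod 2 × F)).Adj (g i) (g (i + 1)) :=
    fun i hi => p.adj_getVert_succ hi
  have chord : ∀ i j, i + 1 < j → j ≤ L →
      ¬ (jacobsonGraph (ZMod 2 × F)).Adj (g i) (g j) := by
    intro i j hij hj hadj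
    obtain ⟨m, hm, hc⟩ := edge_getVert p
      (hp.2 _ (getVert_mem_support p i) _ (getVert_mem_support p j) hadj)
    rcases hc with ⟨h1, h2⟩ | ⟨h1, h2⟩
    · have e1 := inj m (by omega) i (by omega) h1
      have e2 := inj (m + 1) (by omega) j (by omega) h2
      omega
    · have e1 := inj m (by omega) j (by omega) h1
      have e2 := inj (m + 1) (by omega) i (by omega) h2
      omega
  have Cc : ∀ i j, i < j → j ≤ L → (g i).1.1 = 1 → (g j).1.1 = 1 → j = i + 1 := by
    intro i j hij hj hi1 hj1
    by_contra hne
    have hne' : g i ≠ g j := fun h => by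
      have := inj i (by omega) j (by omega) h; omega
    exact chord i j (by omega) hj (adj_iff.mpr ⟨hne', Or.inl ⟨hi1, hj1⟩⟩)
  have Nrun : ∀ i, i + 2 ≤ L → (g i).1.1 = 0 → (g (i + 1)).1.1 = 0 →
      (g (i + 1 + 1)).1.1 = 0 → False := by
    intro i h2 n0 n1 n2
    have a1 := (adj_iff.mp (adj i (by omega))).2
    have a2 := (adj_iff.mp (adj (i + 1) (by omega))).2
    rcases a1 with ⟨h, _⟩ | hm1
    · exact zmod2_zero_ne_one (n0.symm.trans h)
    rcases a2 with ⟨h, _⟩ | hm2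
    · exact zmod2_zero_ne_one (n1.symm.trans h)
    have hmid : (g (i + 1)).1.2 ≠ 0 := snd_ne_zero n1
    have hsnd : (g i).1.2 = (g (i + 1 + 1)).1.2 := by
      have h' : (g i).1.2 * (g (i + 1)).1.2 = (g (i + 1 + 1)).1.2 * (g (i + 1)).1.2 := by
        rw [hm1]
        rw [mul_comm] at hm2
        rw [hm2]
      exact mul_right_cancel₀ hmid h'
    have hfst : (g i).1.1 = (g (i + 1 + 1)).1.1 := by rw [n0, n2]
    have heq : g i = g (i + 1 + 1) := Subtype.ext (Prod.ext_iff.mpr ⟨hfst, hsnd⟩)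
    have := inj i (by omega) (i + 1 + 1) (by omega) heq
    omega
  have key : ∀ j0, j0 ≤ 2 → (g j0).1.1 = 1 → False := by
    intro j0 hj0 hc
    have hN : ∀ t, j0 + 2 ≤ t → t ≤ j0 + 4 → (g t).1.1 = 0 := by
      intro t ht2 ht4
      rcases fst_cases (g t) with h | h
      · exact h
      · exfalso
        have := Cc j0 t (by omega) (by omega) hc h
        omega
    exact Nrun (j0 + 2) (by omega) (hN (j0 + 2) (by omega) (by omega))
      (hN (j0 + 2 + 1) (by omega) (by omega)) (hN (j0 + 2 + 1 + 1) (by omega) (by omega))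
  rcases fst_cases (g 0) with n0 | c0
  · rcases fst_cases (g 1) with n1 | c1
    · rcases fst_cases (g 2) with n2 | c2
      · exact Nrun 0 (by omega) n0 n1 n2
      · exact key 2 (by omega) c2
    · exact key 1 (by omega) c1
  · exact key 0 (by omega) c0

/-! ### Upper bound for induced cycles -/

lemma cycle_core {u : Vx F} (p : (jacobsonGraph (ZMod 2 × F)).Walk u u)
    (hp : IsInducedCycle p) (hu : u.1.1 = 0) : p.length ≤ 4 := by
  by_contra hlen
  push_neg at hlen
  set L := p.length with hL
  set g := p.getVert with hg
  have hg0 : g 0 = u := p.getVert_zero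
  have hgL : g L = u := p.getVert_length
  have inj : ∀ i, 1 ≤ i → i ≤ L → ∀ j, 1 ≤ j → j ≤ L → g i = g j → i = j :=
    tail_nodup_getVert_inj hp.1.support_nodup
  have adj : ∀ i, i < L → (jacobsonGraph (ZMod 2 × F)).Adj (g i) (g (i + 1)) :=
    fun i hi => p.adj_getVert_succ hi
  have hu2 : u.1.2 ≠ 0 := snd_ne_zero hu
  -- neighbor at position 1
  have a0 := (adj_iff.mp (adj 0 (by omega))).2
  rw [hg0] at a0
  rcases a0 with ⟨h, _⟩ | h1
  · exact zmod2_zero_ne_one (hu.symm.trans h)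
  -- h1 : u.1.2 * (g 1).1.2 = 1
  have aL := adj (L - 1) (by omega)
  have eL : L - 1 + 1 = L := by omega
  rw [eL] at aL
  have aL2 := (adj_iff.mp aL).2
  rw [hgL] at aL2
  rcases aL2 with ⟨_, h⟩ | h2
  · exact zmod2_zero_ne_one (hu.symm.trans h)
  -- h2 : (g (L-1)).1.2 * u.1.2 = 1
  have hsnd1 : (g 1).1.2 = (g (L - 1)).1.2 := by
    have h' : (g 1).1.2 * u.1.2 = (g (L - 1)).1.2 * u.1.2 := by
      rw [h2, mul_comm]; exact h1
    exact mul_right_cancel₀ hu2 h'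
  have hne1L : g 1 ≠ g (L - 1) := by
    intro h
    have := inj 1 (by omega) (by omega) (L - 1) (by omega) (by omega) h
    omega
  have hcases : ((g 1).1.1 = 0 ∧ (g (L - 1)).1.1 = 1) ∨
      ((g 1).1.1 = 1 ∧ (g (L - 1)).1.1 = 0) := by
    rcases fst_cases (g 1) with h | h <;> rcases fst_cases (g (L - 1)) with h' | h'
    · exact absurd (Subtype.ext (Prod.ext_iff.mpr ⟨h.trans h'.symm, hsnd1⟩)) hne1L
    · exact Or.inl ⟨h, h'⟩
    · exact Or.inr ⟨h, h'⟩
    · exact absurd (Subtype.ext (Prod.ext_iff.mpr ⟨h.trans h'.symm, hsnd1⟩)) hne1L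
  rcases hcases with ⟨hA1, hA2⟩ | ⟨hB1, hB2⟩
  · -- g 1 is N, g (L-1) is C
    have a1 := (adj_iff.mp (adj 1 (by omega))).2
    rcases a1 with ⟨h, _⟩ | hm
    · exact zmod2_zero_ne_one (hA1.symm.trans h)
    -- hm : (g 1).1.2 * (g (1+1)).1.2 = 1
    have hg1snd : (g 1).1.2 ≠ 0 := snd_ne_zero hA1
    have h1' : (g 1).1.2 * u.1.2 = 1 := by rw [mul_comm]; exact h1
    have hsnd2 : (g (1 + 1)).1.2 = u.1.2 := mul_left_cancel₀ hg1snd (hm.trans h1'.symm)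
    have hne2u : g (1 + 1) ≠ u := by
      intro h
      have := inj (1 + 1) (by omega) (by omega) L (by omega) (by omega)
        (by rw [hgL]; exact h)
      omega
    have hC2 : (g (1 + 1)).1.1 = 1 := by
      rcases fst_cases (g (1 + 1)) with h | h
      · exact absurd (Subtype.ext (Prod.ext_iff.mpr ⟨h.trans hu.symm, hsnd2⟩)) hne2u
      · exact h
    have hne2 : g (1 + 1) ≠ g (L - 1) := by
      intro h
      have := inj (1 + 1) (by omega) (by omega) (L - 1) (by omega) (by omega) h
      omega
    obtain ⟨m, hm', hc⟩ := edge_getVert p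
      (hp.2 _ (getVert_mem_support p (1 + 1)) _ (getVert_mem_support p (L - 1))
        (adj_iff.mpr ⟨hne2, Or.inl ⟨hC2, hA2⟩⟩))
    rw [← hg] at hc
    rcases hc with ⟨hc1, hc2⟩ | ⟨hc1, hc2⟩
    · have hm0 : m ≠ 0 := by
        intro h
        rw [h, hg0] at hc1
        exact hne2u hc1.symm
      have hm2 : m = 1 + 1 := inj m (by omega) (by omega) (1 + 1) (by omega) (by omega) hc1
      rw [hm2] at hc2
      have := inj (1 + 1 + 1) (by omega) (by omega) (L - 1) (by omega) (by omega) hc2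
      omega
    · have hm0 : m ≠ 0 := by
        intro h
        rw [h, hg0] at hc1
        have := congrArg (fun z : Vx F => z.1.1) hc1
        rw [hu, hA2] at this
        exact zmod2_zero_ne_one this
      have hm2 : m = L - 1 := inj m (by omega) (by omega) (L - 1) (by omega) (by omega) hc1
      rw [hm2, eL, hgL] at hc2
      exact hne2u hc2.symm
  · -- g 1 is C, g (L-1) is N
    have aL3 := adj (L - 2) (by omega)
    have eL2 : L - 2 + 1 = L - 1 := by omega
    rw [eL2] at aL3
    have aL3' := (adj_iff.mp aL3).2
    rcases aL3' with ⟨_, h⟩ | hm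
    · exact zmod2_zero_ne_one (hB2.symm.trans h)
    -- hm : (g (L-2)).1.2 * (g (L-1)).1.2 = 1
    have hgl1snd : (g (L - 1)).1.2 ≠ 0 := snd_ne_zero hB2
    have h2' : u.1.2 * (g (L - 1)).1.2 = 1 := by rw [mul_comm]; exact h2
    have hsndL2 : (g (L - 2)).1.2 = u.1.2 := mul_right_cancel₀ hgl1snd (hm.trans h2'.symm)
    have hneL2u : g (L - 2) ≠ u := by
      intro h
      have := inj (L - 2) (by omega) (by omega) L (by omega) (by omega)
        (by rw [hgL]; exact h)
      omega
    have hCL2 : (g (L - 2)).1.1 = 1 := by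
      rcases fst_cases (g (L - 2)) with h | h
      · exact absurd (Subtype.ext (Prod.ext_iff.mpr ⟨h.trans hu.symm, hsndL2⟩)) hneL2u
      · exact h
    have hne' : g 1 ≠ g (L - 2) := by
      intro h
      have := inj 1 (by omega) (by omega) (L - 2) (by omega) (by omega) h
      omega
    obtain ⟨m, hm', hc⟩ := edge_getVert p
      (hp.2 _ (getVert_mem_support p 1) _ (getVert_mem_support p (L - 2))
        (adj_iff.mpr ⟨hne', Or.inl ⟨hB1, hCL2⟩⟩))
    rw [← hg] at hc
    rcases hc with ⟨hc1, hc2⟩ | ⟨hc1, hc2⟩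
    · have hm0 : m ≠ 0 := by
        intro h
        rw [h, hg0] at hc1
        have := congrArg (fun z : Vx F => z.1.1) hc1
        rw [hu, hB1] at this
        exact zmod2_zero_ne_one this
      have hm2 : m = 1 := inj m (by omega) (by omega) 1 (by omega) (by omega) hc1
      rw [hm2] at hc2
      have := inj (1 + 1) (by omega) (by omega) (L - 2) (by omega) (by omega) hc2
      omega
    · have hm0 : m ≠ 0 := by
        intro h
        rw [h, hg0] at hc1
        have := congrArg (fun z : Vx F => z.1.1) hc1
        rw [hu, hCL2] at this
        exact zmod2_zero_ne_one this
      have hm2 : m = L - 2 := inj m (by omega) (by omega) (L - 2) (by omega) (by omega) hc1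
      rw [hm2, eL2] at hc2
      have := congrArg (fun z : Vx F => z.1.1) hc2
      rw [hB2, hB1] at this
      exact zmod2_zero_ne_one this

lemma cycle_le {u : Vx F} (p : (jacobsonGraph (ZMod 2 × F)).Walk u u)
    (hp : IsInducedCycle p) : p.length ≤ 4 := by
  haveI : DecidableEq (Vx F) := Classical.decEq _
  by_cases hN : ∃ x ∈ p.support, x.1.1 = 0
  · obtain ⟨x, hx, hx0⟩ := hN
    have h := cycle_core (p.rotate x hx) (rotate_induced hp hx) hx0
    rwa [length_rotate] at h
  · push_neg at hN
    by_contra hlen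
    push_neg at hlen
    set L := p.length with hL
    set g := p.getVert with hg
    have hg0 : g 0 = u := p.getVert_zero
    have hgL : g L = u := p.getVert_length
    have inj : ∀ i, 1 ≤ i → i ≤ L → ∀ j, 1 ≤ j → j ≤ L → g i = g j → i = j :=
      tail_nodup_getVert_inj hp.1.support_nodup
    have hC : ∀ i, (g i).1.1 = 1 := fun i =>
      (fst_cases _).resolve_left (fun h => hN _ (getVert_mem_support p i) h)
    have hne : g 1 ≠ g 3 := by
      intro h
      have := inj 1 (by omega) (by omega) 3 (by omega) (by omega) h
      omega
    obtain ⟨m, hm, hc⟩ := edge_getVert p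
      (hp.2 _ (getVert_mem_support p 1) _ (getVert_mem_support p 3)
        (adj_iff.mpr ⟨hne, Or.inl ⟨hC 1, hC 3⟩⟩))
    rw [← hg] at hc
    rcases hc with ⟨hc1, hc2⟩ | ⟨hc1, hc2⟩
    · rcases Nat.eq_zero_or_pos m with rfl | hm1
      · rw [hg0, ← hgL] at hc1
        have := inj L (by omega) (by omega) 1 (by omega) (by omega) hc1
        omega
      · have hm2 : m = 1 := inj m (by omega) (by omega) 1 (by omega) (by omega) hc1
        rw [hm2] at hc2
        have := inj (1 + 1) (by omega) (by omega) 3 (by omega) (by omega) hc2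
        omega
    · rcases Nat.eq_zero_or_pos m with rfl | hm1
      · rw [hg0, ← hgL] at hc1
        have := inj L (by omega) (by omega) 3 (by omega) (by omega) hc1
        omega
      · have hm2 : m = 3 := inj m (by omega) (by omega) 3 (by omega) (by omega) hc1
        rw [hm2] at hc2
        have := inj (3 + 1) (by omega) (by omega) 1 (by omega) (by omega) hc2
        omega

end JacAux

set_option maxHeartbeats 1600000 in
/-- For a finite field F with |F| ≥ 7, the longest induced path in the
Jacobson graph of ℤ/2 ⊕ F has length 5, while the longest induced cycle has length 4. -/
theorem jacobsonGraph_zmod2_field_longest_induced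
    (F : Type*) [Field F] [Finite F] (hF : 7 ≤ Nat.card F) :
    (∃ (u v : {x : ZMod 2 × F // x ∉ Ideal.jacobson (⊥ : Ideal (ZMod 2 × F))})
      (p : (jacobsonGraph (ZMod 2 × F)).Walk u v), IsInducedPath p ∧ p.length = 5) ∧
    (∀ (u v : {x : ZMod 2 × F // x ∉ Ideal.jacobson (⊥ : Ideal (ZMod 2 × F))})
      (p : (jacobsonGraph (ZMod 2 × F)).Walk u v), IsInducedPath p → p.length ≤ 5) ∧
    (∃ (u : {x : ZMod 2 × F // x ∉ Ideal.jacobson (⊥ : Ideal (ZMod 2 × F))})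
      (p : (jacobsonGraph (ZMod 2 × F)).Walk u u), IsInducedCycle p ∧ p.length = 4) ∧
    (∀ (u : {x : ZMod 2 × F // x ∉ Ideal.jacobson (⊥ : Ideal (ZMod 2 × F))})
      (p : (jacobsonGraph (ZMod 2 × F)).Walk u u), IsInducedCycle p → p.length ≤ 4) := by
  classical
  haveI := Fintype.ofFinite F
  rw [Nat.card_eq_fintype_card] at hF
  have hex : ∀ (s : Finset F), s.card < 7 → ∃ x, x ∉ s := by
    intro s hs
    by_contra hc
    push_neg at hc
    have hsub : Finset.univ ⊆ s := fun x _ => hc x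
    have := Finset.card_le_card hsub
    rw [Finset.card_univ] at this
    omega
  obtain ⟨a, ha⟩ := hex {0, 1, -1} (by
    have c1 : ({-1} : Finset F).card = 1 := Finset.card_singleton _
    have c2 := Finset.card_insert_le (1 : F) ({-1} : Finset F)
    have c3 := Finset.card_insert_le (0 : F) ({1, -1} : Finset F)
    omega)
  simp only [Finset.mem_insert, Finset.mem_singleton, not_or] at ha
  obtain ⟨ha0, ha1, han1⟩ := ha
  obtain ⟨b, hb⟩ := hex {0, 1, -1, a, a⁻¹} (by
    have c1 : ({a⁻¹} : Finset F).card = 1 := Finset.card_singleton _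
    have c2 := Finset.card_insert_le a ({a⁻¹} : Finset F)
    have c3 := Finset.card_insert_le (-1 : F) ({a, a⁻¹} : Finset F)
    have c4 := Finset.card_insert_le (1 : F) ({-1, a, a⁻¹} : Finset F)
    have c5 := Finset.card_insert_le (0 : F) ({1, -1, a, a⁻¹} : Finset F)
    omega)
  simp only [Finset.mem_insert, Finset.mem_singleton, not_or] at hb
  obtain ⟨hb0, hb1, hbn1, hbna, hbnainv⟩ := hb
  -- basic field facts
  have haa : a * a ≠ 1 := fun h => by
    rcases mul_self_eq_one_iff.mp h with h' | h'
    exacts [ha1 h', han1 h']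
  have hbb : b * b ≠ 1 := fun h => by
    rcases mul_self_eq_one_iff.mp h with h' | h'
    exacts [hb1 h', hbn1 h']
  have hab : a * b ≠ 1 := fun h => hbnainv (inv_eq_of_mul_eq_one_right h).symm
  have hba : b * a ≠ 1 := fun h => hab (by rwa [mul_comm] at h)
  have habi : a * b⁻¹ ≠ 1 := fun h => hbna (by
    have := inv_eq_of_mul_eq_one_right h
    rw [inv_inj] at this
    exact this.symm)
  have hbia : b⁻¹ * a ≠ 1 := fun h => habi (by rwa [mul_comm] at h)
  have haib : a⁻¹ * b ≠ 1 := fun h => hbna (by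
    have := inv_eq_of_mul_eq_one_right h
    rw [inv_inv] at this
    exact this.symm)
  have hbai : b * a⁻¹ ≠ 1 := fun h => haib (by rwa [mul_comm] at h)
  have haibi : a⁻¹ * b⁻¹ ≠ 1 := fun h => hbnainv (by
    have := inv_eq_of_mul_eq_one_right h
    rw [inv_inv] at this
    exact inv_injective (by rw [inv_inv]; exact this.symm))
  have hbiai : b⁻¹ * a⁻¹ ≠ 1 := fun h => haibi (by rwa [mul_comm] at h)
  have haiai : a⁻¹ * a⁻¹ ≠ 1 := fun h => haa (by
    rw [← mul_inv] at h
    rwa [inv_eq_one] at h)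
  have ha0' : a⁻¹ ≠ 0 := inv_ne_zero ha0
  have hb0' : b⁻¹ ≠ 0 := inv_ne_zero hb0
  have hia : a * a⁻¹ = 1 := mul_inv_cancel₀ ha0
  have hai : a⁻¹ * a = 1 := inv_mul_cancel₀ ha0
  have hib : b * b⁻¹ = 1 := mul_inv_cancel₀ hb0
  have hbi : b⁻¹ * b = 1 := inv_mul_cancel₀ hb0
  have hainv : a ≠ a⁻¹ := fun h => haa (by nth_rewrite 2 [h]; exact hia)
  have hbinv : b ≠ b⁻¹ := fun h => hbb (by nth_rewrite 2 [h]; exact hib)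
  have habne : a ≠ b := fun h => hbna h.symm
  have haibne : a⁻¹ ≠ b := fun h => hbnainv h.symm
  have habine : a ≠ b⁻¹ := fun h => haibne (by rw [h, inv_inv])
  have haibine : a⁻¹ ≠ b⁻¹ := fun h => habne (inv_injective h)
  have hz01 : (0 : ZMod 2) ≠ 1 := by decide
  have hz10 : (1 : ZMod 2) ≠ 0 := by decide
  -- vertices
  have nzr : ∀ (c : ZMod 2) (x : F), x ≠ 0 → ((c, x) : ZMod 2 × F) ≠ 0 := by
    intro c x h hh
    exact h (congrArg Prod.snd hh)
  have nzl : ∀ (c : ZMod 2) (x : F), c ≠ 0 → ((c, x) : ZMod 2 × F) ≠ 0 := by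
    intro c x h hh
    exact h (congrArg Prod.fst hh)
  have pne : ∀ (c : ZMod 2) (x y : F), x ≠ y → ((c, x) : ZMod 2 × F) ≠ (c, y) := by
    intro c x y h hh
    exact h (congrArg Prod.snd hh)
  have pne01 : ∀ (x y : F), ((0, x) : ZMod 2 × F) ≠ (1, y) := by
    intro x y hh
    exact hz01 (congrArg Prod.fst hh)
  have pne10 : ∀ (x y : F), ((1, x) : ZMod 2 × F) ≠ (0, y) := by
    intro x y hh
    exact hz10 (congrArg Prod.fst hh)
  refine ⟨?_, fun u v p hp => JacAux.path_le p hp, ?_, fun u p hp => JacAux.cycle_le p hp⟩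
  · -- induced path of length 5 : (0,a) (0,a⁻¹) (1,a) (1,b) (0,b⁻¹) (0,b)
    have nz1 := nzr 0 a ha0
    have nz2 := nzr 0 a⁻¹ ha0'
    have nz3 := nzl 1 a hz10
    have nz4 := nzl 1 b hz10
    have nz5 := nzr 0 b⁻¹ hb0'
    have nz6 := nzr 0 b hb0
    have ne12 := JacAux.vx_ne nz1 nz2 (pne 0 a a⁻¹ hainv)
    have ne13 := JacAux.vx_ne nz1 nz3 (pne01 a a)
    have ne14 := JacAux.vx_ne nz1 nz4 (pne01 a b)
    have ne15 := JacAux.vx_ne nz1 nz5 (pne 0 a b⁻¹ habine)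
    have ne16 := JacAux.vx_ne nz1 nz6 (pne 0 a b habne)
    have ne23 := JacAux.vx_ne nz2 nz3 (pne01 a⁻¹ a)
    have ne24 := JacAux.vx_ne nz2 nz4 (pne01 a⁻¹ b)
    have ne25 := JacAux.vx_ne nz2 nz5 (pne 0 a⁻¹ b⁻¹ haibine)
    have ne26 := JacAux.vx_ne nz2 nz6 (pne 0 a⁻¹ b haibne)
    have ne34 := JacAux.vx_ne nz3 nz4 (pne 1 a b habne)
    have ne35 := JacAux.vx_ne nz3 nz5 (pne10 a b⁻¹)
    have ne36 := JacAux.vx_ne nz3 nz6 (pne10 a b)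
    have ne45 := JacAux.vx_ne nz4 nz5 (pne10 b b⁻¹)
    have ne46 := JacAux.vx_ne nz4 nz6 (pne10 b b)
    have ne56 := JacAux.vx_ne nz5 nz6 (pne 0 b⁻¹ b (fun h => hbinv h.symm))
    have e12 : (jacobsonGraph (ZMod 2 × F)).Adj (JacAux.vx F (0, a) nz1) (JacAux.vx F (0, a⁻¹) nz2) :=
      JacAux.adj_iff.mpr ⟨ne12, Or.inr hia⟩
    have e23 : (jacobsonGraph (ZMod 2 × F)).Adj (JacAux.vx F (0, a⁻¹) nz2) (JacAux.vx F (1, a) nz3) :=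
      JacAux.adj_iff.mpr ⟨ne23, Or.inr hai⟩
    have e34 : (jacobsonGraph (ZMod 2 × F)).Adj (JacAux.vx F (1, a) nz3) (JacAux.vx F (1, b) nz4) :=
      JacAux.adj_iff.mpr ⟨ne34, Or.inl ⟨rfl, rfl⟩⟩
    have e45 : (jacobsonGraph (ZMod 2 × F)).Adj (JacAux.vx F (1, b) nz4) (JacAux.vx F (0, b⁻¹) nz5) :=
      JacAux.adj_iff.mpr ⟨ne45, Or.inr hib⟩
    have e56 : (jacobsonGraph (ZMod 2 × F)).Adj (JacAux.vx F (0, b⁻¹) nz5) (JacAux.vx F (0, b) nz6) :=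
      JacAux.adj_iff.mpr ⟨ne56, Or.inr hbi⟩
    refine ⟨_, _, SimpleGraph.Walk.cons e12 (SimpleGraph.Walk.cons e23 (SimpleGraph.Walk.cons e34
      (SimpleGraph.Walk.cons e45 (SimpleGraph.Walk.cons e56 SimpleGraph.Walk.nil)))), ⟨?_, ?_⟩, rfl⟩
    · rw [SimpleGraph.Walk.isPath_def]
      simp [ne12, ne13, ne14, ne15, ne16, ne23, ne24, ne25, ne26, ne34, ne35, ne36,
        ne45, ne46, ne56, Ne.symm ne12, Ne.symm ne13, Ne.symm ne14, Ne.symm ne15,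
        Ne.symm ne16, Ne.symm ne23, Ne.symm ne24, Ne.symm ne25, Ne.symm ne26,
        Ne.symm ne34, Ne.symm ne35, Ne.symm ne36, Ne.symm ne45, Ne.symm ne46,
        Ne.symm ne56]
    · intro x hx y hy hadj
      simp only [SimpleGraph.Walk.support_cons, SimpleGraph.Walk.support_nil,
        List.mem_cons, List.not_mem_nil, or_false, List.mem_singleton] at hx hy
      rcases hx with rfl | rfl | rfl | rfl | rfl | rfl <;>
        rcases hy with rfl | rfl | rfl | rfl | rfl | rfl <;>
        first
        | exact absurd rfl hadj.ne
        | (exfalso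
           rw [JacAux.adj_iff] at hadj
           rcases hadj.2 with ⟨h1, h2⟩ | h
           · first | exact hz01 h1 | exact hz01 h2
           · first
             | exact haa h | exact hbb h | exact hab h | exact hba h
             | exact habi h | exact hbia h | exact haib h | exact hbai h
             | exact haibi h | exact hbiai h | exact haiai h)
        | (simp only [SimpleGraph.Walk.edges_cons, SimpleGraph.Walk.edges_nil,
            List.mem_cons, List.not_mem_nil, or_false, Sym2.eq_iff, eq_self_iff_true,
            and_self, true_and, and_true, true_or, or_true])
  · -- induced cycle of length 4 : (1,a) (0,a⁻¹) (0,a) (1,a⁻¹)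
    have nz1 := nzl 1 a hz10
    have nz2 := nzr 0 a⁻¹ ha0'
    have nz3 := nzr 0 a ha0
    have nz4 := nzl 1 a⁻¹ hz10
    have ne12 := JacAux.vx_ne nz1 nz2 (pne10 a a⁻¹)
    have ne13 := JacAux.vx_ne nz1 nz3 (pne10 a a)
    have ne14 := JacAux.vx_ne nz1 nz4 (pne 1 a a⁻¹ hainv)
    have ne23 := JacAux.vx_ne nz2 nz3 (pne 0 a⁻¹ a (fun h => hainv h.symm))
    have ne24 := JacAux.vx_ne nz2 nz4 (pne01 a⁻¹ a⁻¹)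
    have ne34 := JacAux.vx_ne nz3 nz4 (pne01 a a⁻¹)
    have e12 : (jacobsonGraph (ZMod 2 × F)).Adj (JacAux.vx F (1, a) nz1) (JacAux.vx F (0, a⁻¹) nz2) :=
      JacAux.adj_iff.mpr ⟨ne12, Or.inr hia⟩
    have e23 : (jacobsonGraph (ZMod 2 × F)).Adj (JacAux.vx F (0, a⁻¹) nz2) (JacAux.vx F (0, a) nz3) :=
      JacAux.adj_iff.mpr ⟨ne23, Or.inr hai⟩
    have e34 : (jacobsonGraph (ZMod 2 × F)).Adj (JacAux.vx F (0, a) nz3) (JacAux.vx F (1, a⁻¹) nz4) :=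
      JacAux.adj_iff.mpr ⟨ne34, Or.inr hia⟩
    have e41 : (jacobsonGraph (ZMod 2 × F)).Adj (JacAux.vx F (1, a⁻¹) nz4) (JacAux.vx F (1, a) nz1) :=
      JacAux.adj_iff.mpr ⟨fun h => ne14 h.symm, Or.inl ⟨rfl, rfl⟩⟩
    refine ⟨_, SimpleGraph.Walk.cons e12 (SimpleGraph.Walk.cons e23 (SimpleGraph.Walk.cons e34
      (SimpleGraph.Walk.cons e41 SimpleGraph.Walk.nil))), ⟨?_, ?_⟩, rfl⟩
    · rw [SimpleGraph.Walk.isCycle_def]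
      refine ⟨?_, by simp, ?_⟩
      · rw [SimpleGraph.Walk.isTrail_def]
        simp [Sym2.eq_iff, ne12, ne13, ne14, ne23, ne24, ne34, Ne.symm ne12,
          Ne.symm ne13, Ne.symm ne14, Ne.symm ne23, Ne.symm ne24, Ne.symm ne34]
      · simp [ne12, ne13, ne14, ne23, ne24, ne34, Ne.symm ne12, Ne.symm ne13,
          Ne.symm ne14, Ne.symm ne23, Ne.symm ne24, Ne.symm ne34]
    · intro x hx y hy hadj
      simp only [SimpleGraph.Walk.support_cons, SimpleGraph.Walk.support_nil,
        List.mem_cons, List.not_mem_nil, or_false, List.mem_singleton] at hx hy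
      rcases hx with rfl | rfl | rfl | rfl | rfl <;>
        rcases hy with rfl | rfl | rfl | rfl | rfl <;>
        first
        | exact absurd rfl hadj.ne
        | (exfalso
           rw [JacAux.adj_iff] at hadj
           rcases hadj.2 with ⟨h1, h2⟩ | h
           · first | exact hz01 h1 | exact hz01 h2
           · first | exact haa h | exact haiai h)
        | (simp only [SimpleGraph.Walk.edges_cons, SimpleGraph.Walk.edges_nil,
            List.mem_cons, List.not_mem_nil, or_false, Sym2.eq_iff, eq_self_iff_true,
            and_self, true_and, and_true, true_or, or_true])
end
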